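/- arXiv:2503.21078 — 5 statements merged into one kernel-verified Lean document; each statement's English description precedes it below -/
import Mathlib

section
/- Let u, v, h be smooth functions of t near t0 with Taylor coefficients u_k, v_k, h_k at t0, and suppose v'(t) = h(t)·u'(t) near t0. Then for every k ≥ 1, v_k = (1/k)·∑_{i=1}^{k} i·u_i·h_{k−i}. -/
open Finset Filter Topology

private lemma iDW_open {f : ℝ → ℝ} {s : Set ℝ} {x : ℝ} (n : ℕ)
    (hs : IsOpen s) (hx : x ∈ s) :
    iteratedDerivWithin n f s x = iteratedDeriv n f x := by
  rw [iteratedDerivWithin_eq_iteratedFDerivWithin, iteratedDeriv_eq_iteratedFDeriv,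
    iteratedFDerivWithin_of_isOpen n hs hx]

private lemma iD_add_at {n : ℕ} {f g : ℝ → ℝ} {x : ℝ}
    (hf : ContDiffAt ℝ n f x) (hg : ContDiffAt ℝ n g x) :
    iteratedDeriv n (fun y => f y + g y) x = iteratedDeriv n f x + iteratedDeriv n g x := by
  obtain ⟨u, hu, hfu⟩ := hf.contDiffOn le_rfl (by simp)
  obtain ⟨v, hv, hgv⟩ := hg.contDiffOn le_rfl (by simp)
  have hso : IsOpen (interior (u ∩ v)) := isOpen_interior
  have hxs : x ∈ interior (u ∩ v) := mem_interior_iff_mem_nhds.2 (Filter.inter_mem hu hv)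
  have h1 : ContDiffOn ℝ n f (interior (u ∩ v)) :=
    hfu.mono (interior_subset.trans Set.inter_subset_left)
  have h2 : ContDiffOn ℝ n g (interior (u ∩ v)) :=
    hgv.mono (interior_subset.trans Set.inter_subset_right)
  rw [← iDW_open n hso hxs, ← iDW_open n hso hxs, ← iDW_open n hso hxs]
  exact iteratedDerivWithin_add hxs hso.uniqueDiffOn (h1 x hxs) (h2 x hxs)

private lemma cdAt_deriv {n : ℕ} {f : ℝ → ℝ} {x : ℝ}
    (hf : ContDiffAt ℝ (n + 1 : ℕ) f x) : ContDiffAt ℝ n (deriv f) x := by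
  have h := hf.fderiv_right (m := n) (by exact_mod_cast le_rfl)
  have : ContDiffAt ℝ n (fun y => (fderiv ℝ f y : ℝ → ℝ) 1) x :=
    h.clm_apply contDiffAt_const
  refine this.congr_of_eventuallyEq ?_
  filter_upwards with y
  exact (fderiv_apply_one_eq_deriv).symm

private lemma pascal_sum (n : ℕ) (F G : ℕ → ℝ) :
    ∑ i ∈ range (n + 1), (n.choose i : ℝ) * F (i + 1) * G (n - i)
      + ∑ i ∈ range (n + 1), (n.choose i : ℝ) * F i * G (n + 1 - i)
    = ∑ i ∈ range (n + 2), ((n + 1).choose i : ℝ) * F i * G (n + 1 - i) := by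
  rw [Finset.sum_range_succ' (fun i => ((n + 1).choose i : ℝ) * F i * G (n + 1 - i)) (n + 1),
    Finset.sum_range_succ' (fun i => (n.choose i : ℝ) * F i * G (n + 1 - i)) n]
  simp only [Nat.choose_succ_succ, Nat.succ_sub_succ, Nat.choose_zero_right, Nat.cast_add,
    Nat.cast_one, add_mul, Finset.sum_add_distrib]
  rw [Finset.sum_range_succ (fun i => (n.choose (i + 1) : ℝ) * F (i + 1) * G (n - i)) n]
  simp [Nat.choose_succ_self]
  ring

private lemma leibniz : ∀ (n : ℕ) (f g : ℝ → ℝ) (x : ℝ),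
    ContDiffAt ℝ n f x → ContDiffAt ℝ n g x →
    iteratedDeriv n (fun t => f t * g t) x
      = ∑ i ∈ range (n + 1), (n.choose i : ℝ) * iteratedDeriv i f x * iteratedDeriv (n - i) g x := by
  intro n
  induction n with
  | zero => intro f g x _ _; simp
  | succ n IH =>
    intro f g x hf hg
    have hle : ((n : ℕ) : WithTop ℕ∞) ≤ ((n + 1 : ℕ) : WithTop ℕ∞) := by exact_mod_cast Nat.le_succ n
    have hf' : ContDiffAt ℝ n (deriv f) x := cdAt_deriv hf
    have hg' : ContDiffAt ℝ n (deriv g) x := cdAt_deriv hg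
    have hfn : ContDiffAt ℝ n f x := hf.of_le hle
    have hgn : ContDiffAt ℝ n g x := hg.of_le hle
    have hev : (deriv fun t => f t * g t) =ᶠ[nhds x]
        fun y => deriv f y * g y + f y * deriv g y := by
      filter_upwards [hf.eventually (by simp), hg.eventually (by simp)] with y hfy hgy
      exact deriv_fun_mul (hfy.differentiableAt (by simp))
        (hgy.differentiableAt (by simp))
    have e1 : iteratedDeriv (n + 1) (fun t => f t * g t) x
        = iteratedDeriv n (fun y => deriv f y * g y) x
          + iteratedDeriv n (fun y => f y * deriv g y) x := by
      rw [iteratedDeriv_succ', Filter.EventuallyEq.iteratedDeriv_eq n hev]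
      exact iD_add_at (hf'.mul hgn) (hfn.mul hg')
    rw [e1, IH (deriv f) g x hf' hgn, IH f (deriv g) x hfn hg']
    have e2 : ∑ i ∈ range (n + 1),
        (n.choose i : ℝ) * iteratedDeriv i (deriv f) x * iteratedDeriv (n - i) g x
        = ∑ i ∈ range (n + 1),
          (n.choose i : ℝ) * iteratedDeriv (i + 1) f x * iteratedDeriv (n - i) g x := by
      refine Finset.sum_congr rfl fun i _ => ?_
      rw [← iteratedDeriv_succ']
    have e3 : ∑ i ∈ range (n + 1),
        (n.choose i : ℝ) * iteratedDeriv i f x * iteratedDeriv (n - i) (deriv g) x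
        = ∑ i ∈ range (n + 1),
          (n.choose i : ℝ) * iteratedDeriv i f x * iteratedDeriv (n + 1 - i) g x := by
      refine Finset.sum_congr rfl fun i hi => ?_
      rw [← iteratedDeriv_succ', Nat.succ_sub (Nat.lt_succ_iff.1 (Finset.mem_range.1 hi))]
    rw [e2, e3]
    exact pascal_sum n (fun i => iteratedDeriv i f x) (fun j => iteratedDeriv j g x)

/-- The sub-ODE recurrence: if v' = h·u' near t0 then
v_k = (1/k) ∑_{i=1}^k i u_i h_{k-i} for k ≥ 1. -/
theorem subODE_recurrence (t0 : ℝ) (u v h : ℝ → ℝ)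
    (hu : ContDiffAt ℝ (⊤ : ℕ∞) u t0) (hv : ContDiffAt ℝ (⊤ : ℕ∞) v t0)
    (hh : ContDiffAt ℝ (⊤ : ℕ∞) h t0)
    (hrel : ∀ᶠ t in nhds t0, deriv v t = h t * deriv u t) :
    ∀ k : ℕ, 1 ≤ k →
      iteratedDeriv k v t0 / (k.factorial : ℝ) =
        (1 / (k : ℝ)) * ∑ i ∈ Finset.Icc 1 k,
          (i : ℝ) * (iteratedDeriv i u t0 / (i.factorial : ℝ)) *
            (iteratedDeriv (k - i) h t0 / ((k - i).factorial : ℝ)) := by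
  intro k hk
  obtain ⟨m, rfl⟩ : ∃ m, k = m + 1 := ⟨k - 1, (Nat.succ_pred_eq_of_pos hk).symm⟩
  have hinf : ∀ n : ℕ, ((n : ℕ) : WithTop ℕ∞) ≤ ((⊤ : ℕ∞) : WithTop ℕ∞) := fun n => by
    exact_mod_cast le_top
  have hhm : ContDiffAt ℝ m h t0 := hh.of_le (hinf m)
  have hum1 : ContDiffAt ℝ (m + 1 : ℕ) u t0 := hu.of_le (hinf (m + 1))
  have hdu : ContDiffAt ℝ m (deriv u) t0 := cdAt_deriv hum1
  have key : iteratedDeriv (m + 1) v t0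
      = ∑ i ∈ range (m + 1),
          (m.choose i : ℝ) * iteratedDeriv i h t0 * iteratedDeriv (m + 1 - i) u t0 := by
    rw [iteratedDeriv_succ', Filter.EventuallyEq.iteratedDeriv_eq m hrel,
      leibniz m h (deriv u) t0 hhm hdu]
    refine Finset.sum_congr rfl fun i hi => ?_
    rw [← iteratedDeriv_succ', Nat.succ_sub (Nat.lt_succ_iff.1 (Finset.mem_range.1 hi))]
  rw [key, ← Finset.Ico_add_one_right_eq_Icc, Finset.sum_Ico_eq_sum_range]
  have hrange : m + 1 + 1 - 1 = m + 1 := by omega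
  rw [hrange, Finset.sum_div, Finset.mul_sum, ← Finset.sum_range_reflect
    (fun i => (m.choose i : ℝ) * iteratedDeriv i h t0 * iteratedDeriv (m + 1 - i) u t0
      / ((m + 1).factorial : ℝ)) (m + 1)]
  refine Finset.sum_congr rfl fun i hi => ?_
  have him : i ≤ m := Nat.lt_succ_iff.1 (Finset.mem_range.1 hi)
  have h0 : m + 1 - 1 - i = m - i := by omega
  have h1 : m + 1 - (m - i) = i + 1 := by omega
  have h2 : m + 1 - (1 + i) = m - i := by omega
  have h3 : 1 + i = i + 1 := by omega
  simp only [h0, h1, h2, h3]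
  rw [Nat.choose_symm him, Nat.cast_choose ℝ him]
  have f1 : ((m + 1).factorial : ℝ) = (m + 1) * (m.factorial : ℝ) := by
    rw [Nat.factorial_succ]; push_cast; ring
  have f2 : ((i + 1).factorial : ℝ) = (i + 1) * (i.factorial : ℝ) := by
    rw [Nat.factorial_succ]; push_cast; ring
  rw [f1, f2]
  have hm0 : (m.factorial : ℝ) ≠ 0 := Nat.cast_ne_zero.2 (Nat.factorial_ne_zero m)
  have hi0 : (i.factorial : ℝ) ≠ 0 := Nat.cast_ne_zero.2 (Nat.factorial_ne_zero i)
  have hmi0 : ((m - i).factorial : ℝ) ≠ 0 := Nat.cast_ne_zero.2 (Nat.factorial_ne_zero (m - i))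
  have hm1 : (m : ℝ) + 1 ≠ 0 := by positivity
  have hi1 : (i : ℝ) + 1 ≠ 0 := by positivity
  push_cast
  field_simp
end

section
/- Let Σ be an n×n matrix over ℤ ∪ {−∞} with weakly valid offsets (c, d), i.e. d_j − c_i ≥ Σ_{ij} for all i, j. Let J be an n×n real matrix such that J_{ij} = 0 whenever d_j − c_i > Σ_{ij}. If det J ≠ 0, then equality d_j − c_i = Σ_{ij} holds on some transversal, i.e. the offsets are valid. -/
/-- Lemma B.1: weakly valid offsets giving a nonsingular system Jacobian are valid. -/
theorem weakly_valid_nonsingular_implies_valid (n : ℕ)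
    (S : Fin n → Fin n → WithBot ℤ) (c d : Fin n → ℤ)
    (hweak : ∀ i j, S i j ≤ ((d j - c i : ℤ) : WithBot ℤ))
    (J : Matrix (Fin n) (Fin n) ℝ)
    (hJ : ∀ i j, S i j < ((d j - c i : ℤ) : WithBot ℤ) → J i j = 0)
    (hdet : J.det ≠ 0) :
    ∃ σ : Equiv.Perm (Fin n), ∀ i, S i (σ i) = ((d (σ i) - c i : ℤ) : WithBot ℤ) := by
  by_contra h
  push_neg at h
  apply hdet
  rw [Matrix.det_apply]
  apply Finset.sum_eq_zero
  intro σ _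
  obtain ⟨i, hi⟩ := h σ⁻¹
  have hzero : J (σ (σ⁻¹ i)) (σ⁻¹ i) = 0 := by
    rw [show σ (σ⁻¹ i) = i from σ.apply_symm_apply i]
    exact hJ i (σ⁻¹ i) (lt_of_le_of_ne (hweak i (σ⁻¹ i)) hi)
  have : ∏ j : Fin n, J (σ j) j = 0 :=
    Finset.prod_eq_zero (Finset.mem_univ (σ⁻¹ i)) hzero
  rw [this, smul_zero]
end

section
/- Let Σ be an n×n matrix over ℤ ∪ {−∞} with valid offsets (c, d), and for a fixed row r define Σ* by Σ*_{rj} = Σ_{rj} + 1 (with −∞ + 1 = −∞) and Σ*_{ij} = Σ_{ij} for i ≠ r. Define (c*, d*) by c*_r = c_r − 1, c*_i = c_i otherwise, then if c*_r = −1 add 1 to all entries of c* and d*. Then (c*, d*) is a valid offset pair for Σ*, and Σ and Σ* have exactly the same set of highest-value transversals. -/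
/-- Increment row r of a signature matrix by 1 (with −∞ + 1 = −∞). -/
def rowInc (n : ℕ) (r : Fin n) (S : Fin n → Fin n → WithBot ℤ) :
    Fin n → Fin n → WithBot ℤ :=
  fun i j => if i = r then S i j + 1 else S i j

/-- Offsets (c,d) are valid for S: weak validity with equality on some transversal. -/
def IsValidOffsets (n : ℕ) (S : Fin n → Fin n → WithBot ℤ) (c d : Fin n → ℤ) : Prop :=
  (∀ i j, S i j ≤ ((d j - c i : ℤ) : WithBot ℤ)) ∧
    ∃ σ : Equiv.Perm (Fin n), ∀ i, S i (σ i) = ((d (σ i) - c i : ℤ) : WithBot ℤ)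

/-- σ is a highest-value transversal of S. -/
def IsHVT (n : ℕ) (S : Fin n → Fin n → WithBot ℤ) (σ : Equiv.Perm (Fin n)) : Prop :=
  ∀ τ : Equiv.Perm (Fin n), ∑ i, S i (τ i) ≤ ∑ i, S i (σ i)

lemma rowInc_sum (n : ℕ) (r : Fin n) (S : Fin n → Fin n → WithBot ℤ)
    (τ : Equiv.Perm (Fin n)) :
    ∑ i, rowInc n r S i (τ i) = (∑ i, S i (τ i)) + 1 := by
  have h : ∀ i, rowInc n r S i (τ i)
      = S i (τ i) + (if i = r then (1 : WithBot ℤ) else 0) := by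
    intro i
    unfold rowInc
    by_cases hi : i = r <;> simp [hi]
  simp only [h]
  rw [Finset.sum_add_distrib]
  simp

/-- Lemma 3.3 (i)-(ii): differentiating one equation preserves valid offsets (after the
offset update) and leaves the set of HVTs unchanged. -/
theorem rowInc_offsets_valid_and_same_HVTs (n : ℕ) (r : Fin n)
    (S : Fin n → Fin n → WithBot ℤ) (c d : Fin n → ℤ)
    (hvalid : IsValidOffsets n S c d) :
    (IsValidOffsets n (rowInc n r S)
        (fun i => (if i = r then c i - 1 else c i) + (if c r - 1 = -1 then 1 else 0))
        (fun j => d j + (if c r - 1 = -1 then 1 else 0))) ∧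
      ∀ σ : Equiv.Perm (Fin n), IsHVT n S σ ↔ IsHVT n (rowInc n r S) σ := by
  obtain ⟨hle, σ₀, hσ₀⟩ := hvalid
  constructor
  · constructor
    · intro i j
      unfold rowInc
      by_cases hi : i = r
      · subst hi
        simp only [eq_self_iff_true, if_true]
        have h2 : (d j + (if c i - 1 = -1 then (1:ℤ) else 0)
            - (c i - 1 + (if c i - 1 = -1 then (1:ℤ) else 0))) = d j - c i + 1 := by ring
        rw [h2, WithBot.coe_add, WithBot.coe_one]
        exact add_le_add_left (hle i j) 1
      · simp only [if_neg hi]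
        have h2 : (d j + (if c r - 1 = -1 then (1:ℤ) else 0)
            - (c i + (if c r - 1 = -1 then (1:ℤ) else 0))) = d j - c i := by ring
        rw [h2]
        exact hle i j
    · refine ⟨σ₀, fun i => ?_⟩
      unfold rowInc
      by_cases hi : i = r
      · subst hi
        simp only [eq_self_iff_true, if_true]
        have h2 : (d (σ₀ i) + (if c i - 1 = -1 then (1:ℤ) else 0)
            - (c i - 1 + (if c i - 1 = -1 then (1:ℤ) else 0))) = d (σ₀ i) - c i + 1 := by ring
        rw [h2, WithBot.coe_add, WithBot.coe_one, hσ₀ i]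
      · simp only [if_neg hi]
        have h2 : (d (σ₀ i) + (if c r - 1 = -1 then (1:ℤ) else 0)
            - (c i + (if c r - 1 = -1 then (1:ℤ) else 0))) = d (σ₀ i) - c i := by ring
        rw [h2, hσ₀ i]
  · intro σ
    unfold IsHVT
    constructor
    · intro h τ
      rw [rowInc_sum, rowInc_sum]
      exact add_le_add_left (h τ) 1
    · intro h τ
      have := h τ
      rw [rowInc_sum, rowInc_sum] at this
      exact (WithBot.add_le_add_iff_right (by simp)).mp this
end

section
/- Let g : ℝ^N → ℝ be smooth, and along a smooth path x : ℝ → ℝ^n let G(t) = g applied to the tuple of derivatives (x_j^{(d)}(t)) for j = 1..n, d = 0..D. Suppose for some j the highest derivative of x_j on which g actually depends is order d (g is independent of x_j^{(e)} for e > d). Then the partial derivative of the function defining Ġ(t) = dG/dt with respect to the variable x_j^{(d+1)} equals ∂g/∂x_j^{(d)}. -/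
/-- Griewank's Lemma: viewing the total time-derivative ġ of
g(x, ẋ, …, x^{(D)}) as a function of the derivatives x_j^{(e)}, e ≤ D+1,
treated as independent variables, if g does not depend on derivatives of x_j of
order above d, then ∂ġ/∂x_j^{(d+1)} = ∂g/∂x_j^{(d)}. -/
theorem griewank_lemma (n D : ℕ)
    (g : ((Fin n) × (Fin (D + 1)) → ℝ) → ℝ) (hg : ContDiff ℝ (⊤ : ℕ∞) g)
    (j : Fin n) (d : Fin (D + 1))
    (hind : ∀ (x : (Fin n) × (Fin (D + 1)) → ℝ) (e : Fin (D + 1)), d < e →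
      fderiv ℝ g x (Pi.single (j, e) 1) = 0) :
    ∀ y : (Fin n) × (Fin (D + 2)) → ℝ,
      fderiv ℝ
        (fun z : (Fin n) × (Fin (D + 2)) → ℝ =>
          ∑ p : (Fin n) × (Fin (D + 1)),
            fderiv ℝ g (fun q => z (q.1, q.2.castSucc)) (Pi.single p 1) *
              z (p.1, p.2.succ))
        y (Pi.single (j, d.succ) 1)
      = fderiv ℝ g (fun q => y (q.1, q.2.castSucc)) (Pi.single (j, d) 1) := by
  classical
  intro y
  set R : ((Fin n) × (Fin (D + 2)) → ℝ) →L[ℝ] ((Fin n) × (Fin (D + 1)) → ℝ) :=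
    ContinuousLinearMap.pi (fun q => ContinuousLinearMap.proj (q.1, q.2.castSucc)) with hRdef
  have hRfun : ∀ z : (Fin n) × (Fin (D + 2)) → ℝ,
      R z = fun q => z (q.1, q.2.castSucc) := fun z => rfl
  have hgdiff : Differentiable ℝ g := hg.differentiable (by simp)
  have hg' : ContDiff ℝ (⊤ : ℕ∞) (fderiv ℝ g) := (contDiff_infty_iff_fderiv.mp hg).2
  have hg'diff : Differentiable ℝ (fderiv ℝ g) := hg'.differentiable (by simp)
  set v : (Fin n) × (Fin (D + 2)) → ℝ := Pi.single (j, d.succ) 1 with hv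
  set w : (Fin n) × (Fin (D + 1)) → ℝ := R v with hw
  -- g does not depend on direction w
  have hzero : ∀ x, fderiv ℝ g x w = 0 := by
    intro x
    by_cases hd : (d : ℕ) < D
    · have hwsingle : w = Pi.single (j, (⟨(d : ℕ) + 1, by omega⟩ : Fin (D + 1))) 1 := by
        funext q
        have hwq : w q = v (q.1, q.2.castSucc) := rfl
        rw [hwq, hv, Pi.single_apply, Pi.single_apply]
        congr 1
        simp only [Prod.ext_iff, eq_iff_iff, Fin.ext_iff, Fin.coe_castSucc, Fin.val_succ]
      rw [hwsingle]
      exact hind x _ (by simp [Fin.lt_def])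
    · have hw0 : w = 0 := by
        funext q
        have hwq : w q = v (q.1, q.2.castSucc) := rfl
        rw [hwq, hv, Pi.single_apply, if_neg, Pi.zero_apply]
        intro hc
        have h1 : ((q.2.castSucc : Fin (D+2)) : ℕ) = ((d.succ : Fin (D+2)) : ℕ) :=
          congrArg (fun r : (Fin n) × (Fin (D+2)) => (r.2 : ℕ)) hc
        have h2 := q.2.2
        simp only [Fin.coe_castSucc, Fin.val_succ] at h1
        omega
      rw [hw0, map_zero]
  -- second derivative in direction w vanishes
  have hz2 : ∀ u, fderiv ℝ (fderiv ℝ g) (R y) u w = 0 := by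
    intro u
    have h1 : HasFDerivAt (fun x => fderiv ℝ g x w)
        ((ContinuousLinearMap.apply ℝ ℝ w).comp (fderiv ℝ (fderiv ℝ g) (R y))) (R y) :=
      ((ContinuousLinearMap.apply ℝ ℝ w).hasFDerivAt).comp (R y)
        (hg'diff (R y)).hasFDerivAt
    have h2 : HasFDerivAt (fun x => fderiv ℝ g x w)
        (0 : ((Fin n) × (Fin (D + 1)) → ℝ) →L[ℝ] ℝ) (R y) := by
      have heq : (fun x => fderiv ℝ g x w) = fun _ => (0 : ℝ) :=
        funext fun x => hzero x
      rw [heq]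
      exact hasFDerivAt_const 0 _
    have h3 := h1.unique h2
    have : ((ContinuousLinearMap.apply ℝ ℝ w).comp (fderiv ℝ (fderiv ℝ g) (R y))) u = 0 := by
      rw [h3]; rfl
    exact this
  have hsym := second_derivative_symmetric (f := g) (f' := fderiv ℝ g)
      (fun t => (hgdiff t).hasFDerivAt) ((hg'diff (R y)).hasFDerivAt)
  have hz3 : ∀ u, fderiv ℝ (fderiv ℝ g) (R y) w u = 0 := fun u => by
    rw [← hsym u w]; exact hz2 u
  -- derivative of each h_p
  have hhp : ∀ p : (Fin n) × (Fin (D + 1)),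
      HasFDerivAt (fun z => fderiv ℝ g (R z) (Pi.single p 1))
        (((ContinuousLinearMap.apply ℝ ℝ (Pi.single p 1)).comp
          (fderiv ℝ (fderiv ℝ g) (R y))).comp R) y := by
    intro p
    exact (((ContinuousLinearMap.apply ℝ ℝ (Pi.single p 1)).hasFDerivAt).comp (R y)
      (hg'diff (R y)).hasFDerivAt).comp y R.hasFDerivAt
  -- derivative of whole sum
  have hF : HasFDerivAt
      (fun z : (Fin n) × (Fin (D + 2)) → ℝ =>
        ∑ p : (Fin n) × (Fin (D + 1)),
          fderiv ℝ g (fun q => z (q.1, q.2.castSucc)) (Pi.single p 1) * z (p.1, p.2.succ))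
      (∑ p : (Fin n) × (Fin (D + 1)),
        (fderiv ℝ g (R y) (Pi.single p 1) •
            (ContinuousLinearMap.proj (R := ℝ) (p.1, p.2.succ)) +
          y (p.1, p.2.succ) •
            (((ContinuousLinearMap.apply ℝ ℝ (Pi.single p 1)).comp
              (fderiv ℝ (fderiv ℝ g) (R y))).comp R))) y := by
    apply HasFDerivAt.fun_sum
    intro p _
    have := ((hhp p).fun_mul
      ((ContinuousLinearMap.proj (R := ℝ) (p.1, p.2.succ)).hasFDerivAt
        (x := y)))
    convert this using 2 <;> rfl
  rw [hF.fderiv, ContinuousLinearMap.sum_apply]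
  have hterm : ∀ p ∈ (Finset.univ : Finset ((Fin n) × (Fin (D + 1)))),
      ((fderiv ℝ g (R y) (Pi.single p 1) •
            (ContinuousLinearMap.proj (R := ℝ) (p.1, p.2.succ)) +
          y (p.1, p.2.succ) •
            (((ContinuousLinearMap.apply ℝ ℝ (Pi.single p 1)).comp
              (fderiv ℝ (fderiv ℝ g) (R y))).comp R) :
          ((Fin n) × (Fin (D + 2)) → ℝ) →L[ℝ] ℝ)) v
        = fderiv ℝ g (R y) (Pi.single p 1) * (if p = (j, d) then 1 else 0) := by
    intro p _
    have h1 : (((ContinuousLinearMap.apply ℝ ℝ (Pi.single p 1)).comp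
        (fderiv ℝ (fderiv ℝ g) (R y))).comp R) v
        = fderiv ℝ (fderiv ℝ g) (R y) w (Pi.single p 1) := rfl
    have h2 : (ContinuousLinearMap.proj (R := ℝ)
        (φ := fun _ : (Fin n) × (Fin (D + 2)) => ℝ) (p.1, p.2.succ)) v
        = (if p = (j, d) then (1:ℝ) else 0) := by
      show v (p.1, p.2.succ) = _
      rw [hv, Pi.single_apply]
      congr 1
      simp only [Prod.ext_iff, eq_iff_iff, Fin.ext_iff, Fin.val_succ]
      omega
    rw [ContinuousLinearMap.add_apply, ContinuousLinearMap.smul_apply,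
      ContinuousLinearMap.smul_apply, h1, h2, hz3, smul_zero, add_zero, smul_eq_mul]
  rw [Finset.sum_congr rfl hterm, Finset.sum_eq_single (j, d)]
  · rw [if_pos rfl, mul_one]; rfl
  · intro p _ hp; rw [if_neg hp, mul_zero]
  · intro h; exact absurd (Finset.mem_univ _) h
end

section
/- Define sequences (x_k), (u_k), (x̂_k) by: x_0 given, u_0 = −x_0, x̂_0 = exp(u_0); and for k ≥ 1, x_k = x̂_{k−1}/k, u_k = −x_k, x̂_k = (1/k)·∑_{i=1}^{k} i·u_i·x̂_{k−i}. Then (x_k) are exactly the Taylor coefficients at t0 of the solution x(t) of the IVP ẋ = e^{−x}, x(t0) = x_0; moreover u_k and x̂_k are the Taylor coefficients of −x(t) and of e^{−x(t)} respectively. -/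
private lemma iterDeriv_congr_open {f g : ℝ → ℝ} {U : Set ℝ} (hU : IsOpen U)
    (h : Set.EqOn f g U) (k : ℕ) : ∀ t ∈ U, iteratedDeriv k f t = iteratedDeriv k g t := by
  intro t ht
  exact Filter.EventuallyEq.iteratedDeriv_eq k
    (Filter.eventually_of_mem (hU.mem_nhds ht) h)

private lemma hasDerivAt_zpow_shift (b : ℝ) (m : ℤ) (t : ℝ) (h : t + b ≠ 0) :
    HasDerivAt (fun s => (s + b) ^ m) ((m : ℝ) * (t + b) ^ (m - 1)) t := by
  have := (hasDerivAt_zpow m (t + b) (Or.inl h)).comp t ((hasDerivAt_id t).add_const b)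
  simpa [Function.comp_def] using this

private lemma iterDeriv_inv_shift (b : ℝ) (k : ℕ) :
    ∀ t, -b < t → iteratedDeriv k (fun s => (s + b) ^ (-1 : ℤ)) t
      = (-1) ^ k * (k.factorial : ℝ) * (t + b) ^ (-(k : ℤ) - 1) := by
  induction k with
  | zero => intro t ht; simp
  | succ k ih =>
    intro t ht
    have hmem : ∀ᶠ s in nhds t, s ∈ Set.Ioi (-b) := isOpen_Ioi.mem_nhds ht
    have heq : iteratedDeriv k (fun s => (s + b) ^ (-1 : ℤ))
        =ᶠ[nhds t] fun s => (-1) ^ k * (k.factorial : ℝ) * (s + b) ^ (-(k : ℤ) - 1) :=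
      hmem.mono fun s hs => ih s hs
    have hne : t + b ≠ 0 := by
      have : 0 < t + b := by linarith [ht]
      exact ne_of_gt this
    rw [iteratedDeriv_succ, heq.deriv_eq]
    have hd := (hasDerivAt_zpow_shift b (-(k : ℤ) - 1) t hne).const_mul
      ((-1 : ℝ) ^ k * (k.factorial : ℝ))
    rw [hd.deriv]
    have h1 : (-(k : ℤ) - 1 - 1) = (-((k : ℤ) + 1) - 1) := by ring
    rw [h1, Nat.factorial_succ]
    push_cast
    ring

private lemma iterDeriv_log_shift (b : ℝ) (k : ℕ) :
    ∀ t, -b < t → iteratedDeriv (k + 1) (fun s => Real.log (s + b)) t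
      = (-1) ^ k * (k.factorial : ℝ) * (t + b) ^ (-(k : ℤ) - 1) := by
  induction k with
  | zero =>
    intro t ht
    have hne : t + b ≠ 0 := by
      have : 0 < t + b := by linarith [ht]
      exact ne_of_gt this
    have hd : HasDerivAt (fun s => Real.log (s + b)) (t + b)⁻¹ t := by
      simpa [Function.comp_def] using (Real.hasDerivAt_log hne).comp t ((hasDerivAt_id t).add_const b)
    rw [iteratedDeriv_one, hd.deriv]
    simp [zpow_neg_one]
  | succ k ih =>
    intro t ht
    have hmem : ∀ᶠ s in nhds t, s ∈ Set.Ioi (-b) := isOpen_Ioi.mem_nhds ht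
    have heq : iteratedDeriv (k + 1) (fun s => Real.log (s + b))
        =ᶠ[nhds t] fun s => (-1) ^ k * (k.factorial : ℝ) * (s + b) ^ (-(k : ℤ) - 1) :=
      hmem.mono fun s hs => ih s hs
    have hne : t + b ≠ 0 := by
      have : 0 < t + b := by linarith [ht]
      exact ne_of_gt this
    rw [iteratedDeriv_succ, heq.deriv_eq]
    have hd := (hasDerivAt_zpow_shift b (-(k : ℤ) - 1) t hne).const_mul
      ((-1 : ℝ) ^ k * (k.factorial : ℝ))
    rw [hd.deriv]
    have h1 : (-(k : ℤ) - 1 - 1) = (-((k : ℤ) + 1) - 1) := by ring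
    rw [h1, Nat.factorial_succ]
    push_cast
    ring

/-- The recurrence produced by inserting the exp sub-ODE into ẋ = e^{−x} computes
exactly the Taylor coefficients of x, −x, and e^{−x} at t0. -/
theorem subODE_recurrence_exp_neg (t0 x0 : ℝ) (x : ℝ → ℝ)
    (hx : ∀ t ∈ Set.Ioi (t0 - Real.exp x0), HasDerivAt x (Real.exp (-(x t))) t)
    (hx0 : x t0 = x0)
    (X U V : ℕ → ℝ)
    (hX0 : X 0 = x0) (hU0 : U 0 = -x0) (hV0 : V 0 = Real.exp (U 0))
    (hX : ∀ k : ℕ, 1 ≤ k → X k = V (k - 1) / (k : ℝ))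
    (hU : ∀ k : ℕ, 1 ≤ k → U k = -X k)
    (hV : ∀ k : ℕ, 1 ≤ k →
      V k = (1 / (k : ℝ)) * ∑ i ∈ Finset.Icc 1 k, (i : ℝ) * U i * V (k - i)) :
    ∀ k : ℕ,
      X k = iteratedDeriv k x t0 / (k.factorial : ℝ) ∧
      U k = iteratedDeriv k (fun t => -x t) t0 / (k.factorial : ℝ) ∧
      V k = iteratedDeriv k (fun t => Real.exp (-(x t))) t0 / (k.factorial : ℝ) := by
  set c : ℝ := Real.exp x0 with hc_def
  have hc : 0 < c := Real.exp_pos x0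
  set b : ℝ := c - t0 with hb_def
  set S : Set ℝ := Set.Ioi (t0 - c) with hS_def
  have hSopen : IsOpen S := isOpen_Ioi
  have ht0S : t0 ∈ S := by simp [hS_def]; linarith
  -- identification of the solution: exp (x t) = t + b on S
  have hexp : ∀ t ∈ S, Real.exp (x t) = t + b := by
    have key : ∀ t ∈ S, Real.exp (x t) - t = Real.exp (x t0) - t0 := by
      intro t ht
      have hS_conv : Convex ℝ S := convex_Ioi _
      have hder : ∀ s ∈ S, HasDerivAt (fun u => Real.exp (x u) - u) 0 s := by
        intro s hs
        have h1 : HasDerivAt (fun u => Real.exp (x u))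
            (Real.exp (x s) * Real.exp (-(x s))) s := (hx s hs).exp
        have h2 : Real.exp (x s) * Real.exp (-(x s)) = 1 := by
          rw [← Real.exp_add]; simp
        rw [h2] at h1
        have h3 := h1.sub (hasDerivAt_id' s); rw [sub_self] at h3; exact h3
      refine hS_conv.is_const_of_fderivWithin_eq_zero (𝕜 := ℝ) (f := fun u => Real.exp (x u) - u) (fun s hs => ?_) (fun s hs => ?_) ht ht0S
      · exact ((hder s hs).differentiableAt).differentiableWithinAt
      · rw [fderivWithin_eq_fderiv (hSopen.uniqueDiffOn s hs) (hder s hs).differentiableAt]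
        have h0 : HasFDerivAt (fun u => Real.exp (x u) - u)
            (ContinuousLinearMap.smulRight (1 : ℝ →L[ℝ] ℝ) (0 : ℝ)) s := hder s hs
        rw [h0.fderiv]
        ext y
        simp
    intro t ht
    have h := key t ht
    rw [hx0] at h
    rw [hb_def, hc_def]
    linarith
  have hxlog : ∀ t ∈ S, x t = Real.log (t + b) := by
    intro t ht
    have := hexp t ht
    rw [← this, Real.log_exp]
  have hexpneg : ∀ t ∈ S, Real.exp (-(x t)) = (t + b) ^ (-1 : ℤ) := by
    intro t ht
    rw [Real.exp_neg, hexp t ht, zpow_neg_one]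
  have hSb : S = Set.Ioi (-b) := by rw [hS_def, hb_def]; ring_nf
  have ht0b : -b < t0 := by rw [← Set.mem_Ioi, ← hSb]; exact ht0S
  have ht0bc : t0 + b = c := by rw [hb_def]; ring
  -- closed forms for iterated derivatives at t0
  have hIx : ∀ k : ℕ, iteratedDeriv (k + 1) x t0
      = (-1) ^ k * (k.factorial : ℝ) * c ^ (-(k : ℤ) - 1) := by
    intro k
    rw [iterDeriv_congr_open hSopen (fun t ht => hxlog t ht) (k + 1) t0 ht0S,
      iterDeriv_log_shift b k t0 ht0b, ht0bc]
  have hIv : ∀ k : ℕ, iteratedDeriv k (fun t => Real.exp (-(x t))) t0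
      = (-1) ^ k * (k.factorial : ℝ) * c ^ (-(k : ℤ) - 1) := by
    intro k
    rw [iterDeriv_congr_open hSopen (fun t ht => hexpneg t ht) k t0 ht0S,
      iterDeriv_inv_shift b k t0 ht0b, ht0bc]
  -- target closed forms (Taylor coefficients)
  have hcne : c ≠ 0 := ne_of_gt hc
  set Av : ℕ → ℝ := fun k => (-1) ^ k / c ^ (k + 1) with hAv_def
  set Ax : ℕ → ℝ := fun k => if k = 0 then x0 else (-1) ^ (k + 1) / ((k : ℝ) * c ^ k)
    with hAx_def
  have hzpow : ∀ k : ℕ, (c : ℝ) ^ (-(k : ℤ) - 1) = (c ^ (k + 1))⁻¹ := by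
    intro k
    rw [show (-(k : ℤ) - 1) = -((k : ℤ) + 1) by ring, zpow_neg]
    norm_cast
  -- analytic side equals closed forms
  have hTx : ∀ k : ℕ, iteratedDeriv k x t0 / (k.factorial : ℝ) = Ax k := by
    intro k
    match k with
    | 0 => simp [hAx_def, iteratedDeriv_zero, hx0]
    | (m + 1) =>
      rw [hIx m, hzpow m, hAx_def]
      simp only [Nat.succ_ne_zero, if_false]
      rw [Nat.factorial_succ]
      push_cast
      have hmf : (m.factorial : ℝ) ≠ 0 := Nat.cast_ne_zero.mpr m.factorial_ne_zero
      have hm1 : ((m : ℝ) + 1) ≠ 0 := by positivity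
      have hcp : (c : ℝ) ^ (m + 1) ≠ 0 := pow_ne_zero _ hcne
      field_simp
      ring
  have hTv : ∀ k : ℕ, iteratedDeriv k (fun t => Real.exp (-(x t))) t0 / (k.factorial : ℝ)
      = Av k := by
    intro k
    rw [hIv k, hzpow k, hAv_def]
    have hkf : (k.factorial : ℝ) ≠ 0 := Nat.cast_ne_zero.mpr k.factorial_ne_zero
    have hcp : (c : ℝ) ^ (k + 1) ≠ 0 := pow_ne_zero _ hcne
    field_simp
  have hTu : ∀ k : ℕ, iteratedDeriv k (fun t => -x t) t0 / (k.factorial : ℝ) = -Ax k := by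
    intro k
    rw [show (fun t => -x t) = -x from rfl, iteratedDeriv_neg k x t0,
      neg_div, hTx k]
  -- recurrence side equals closed forms, by strong induction
  have main : ∀ k : ℕ, X k = Ax k ∧ U k = -Ax k ∧ V k = Av k := by
    intro k
    induction k using Nat.strong_induction_on with
    | _ k ih =>
      match k with
      | 0 =>
        refine ⟨by simp [hX0, hAx_def], by simp [hU0, hAx_def], ?_⟩
        rw [hV0, hU0, hAv_def]
        simp [← hx0, Real.exp_neg, hc_def]
      | (m + 1) =>
        have hm1 : (1 : ℕ) ≤ m + 1 := Nat.le_add_left 1 m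
        have hVm : V m = Av m := (ih m (Nat.lt_succ_self m)).2.2
        have hXk : X (m + 1) = Ax (m + 1) := by
          rw [hX (m + 1) hm1]
          simp only [Nat.add_sub_cancel]
          rw [hVm, hAv_def, hAx_def]
          simp only [Nat.succ_ne_zero, if_false]
          push_cast
          have : ((m : ℝ) + 1) ≠ 0 := by positivity
          field_simp
          ring
        have hUk : U (m + 1) = -Ax (m + 1) := by rw [hU (m + 1) hm1, hXk]
        refine ⟨hXk, hUk, ?_⟩
        rw [hV (m + 1) hm1]
        have hterm : ∀ i ∈ Finset.Icc 1 (m + 1),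
            (i : ℝ) * U i * V (m + 1 - i) = (-1) ^ (m + 1) / c ^ (m + 2) := by
          intro i hi
          obtain ⟨hi1, hi2⟩ := Finset.mem_Icc.mp hi
          have hUi : U i = (-1) ^ i / ((i : ℝ) * c ^ i) := by
            have : U i = -Ax i := by
              rcases Nat.lt_or_ge i (m + 1) with h | h
              · exact (ih i h).2.1
              · have : i = m + 1 := le_antisymm hi2 h
                rw [this]; exact hUk
            rw [this, hAx_def]
            simp only [Nat.one_le_iff_ne_zero.mp hi1, if_false]
            rw [pow_succ]
            ring
          have hVi : V (m + 1 - i) = (-1) ^ (m + 1 - i) / c ^ (m + 1 - i + 1) := by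
            have hlt : m + 1 - i < m + 1 := by omega
            have := (ih (m + 1 - i) hlt).2.2
            rw [this, hAv_def]
          rw [hUi, hVi]
          have hine : (i : ℝ) ≠ 0 := Nat.cast_ne_zero.mpr (by omega)
          have hsign : (-1 : ℝ) ^ i * (-1) ^ (m + 1 - i) = (-1) ^ (m + 1) := by
            rw [← pow_add]
            congr 1
            omega
          have hpowc : (c : ℝ) ^ i * c ^ (m + 1 - i + 1) = c ^ (m + 2) := by
            rw [← pow_add]
            congr 1
            omega
          field_simp
          rw [← hsign, ← hpowc]
          ring
        rw [Finset.sum_congr rfl hterm, Finset.sum_const, Nat.card_Icc]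
        simp only [Nat.add_sub_cancel, nsmul_eq_mul]
        have : ((m : ℝ) + 1) ≠ 0 := by positivity
        rw [hAv_def]
        push_cast
        field_simp
  intro k
  obtain ⟨h1, h2, h3⟩ := main k
  exact ⟨by rw [h1, hTx k], by rw [h2, hTu k], by rw [h3, hTv k]⟩
end
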